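/- Let λ > 0, 0 < c < 1/λ, T ∈ ℕ with T ≥ 1, and for 1 ≤ t ≤ T define Δ_t = (c/t)·∏_{s=t+1}^{T} (1 − cλ/s) (empty product = 1). Let 0 ≤ V_C ≤ V_N be reals and let 0 ≤ m ≤ T. Then for every function σ : {1,…,T} → {V_C, V_N} that takes the value V_C at exactly m indices, ∑_{t=1}^{m} Δ_t² V_C² + ∑_{t=m+1}^{T} Δ_t² V_N² ≤ ∑_{t=1}^{T} Δ_t² σ(t)². (Processing all clean data before all noisy data minimizes the accumulated noise ∑_t Δ_t² E[‖Z_t‖²] over all orderings when the learning rate constant satisfies c < 1/λ; this is part 1 of the data-order theorem.) -/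

import Mathlib

open Finset

/-- Data-order theorem, part 1 (clean first is optimal for `cλ < 1`): with the
SGD noise weights `Δ t = (c/t) ∏_{s=t+1}^T (1 - cλ/s)` and any assignment `σ` of
noise levels from `{V_C, V_N}` (with `V_C ≤ V_N`) that uses `V_C` at exactly `m`
indices, the accumulated noise is minimized by placing the clean level `V_C` at
the first `m` steps. -/
theorem statement_8 (lam c : ℝ) (hlam : 0 < lam) (hc : 0 < c) (hclam : c < 1 / lam)
    (T : ℕ) (hT : 1 ≤ T) (Δ : ℕ → ℝ)
    (hΔ : ∀ t, Δ t = (c / t) * ∏ s ∈ Finset.Icc (t + 1) T, (1 - c * lam / s))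
    (VC VN : ℝ) (hVC : 0 ≤ VC) (hVCN : VC ≤ VN)
    (m : ℕ) (hm : m ≤ T)
    (σ : ℕ → ℝ)
    (hσval : ∀ t ∈ Finset.Icc 1 T, σ t = VC ∨ σ t = VN)
    (hσcard : ((Finset.Icc 1 T).filter (fun t => σ t = VC)).card = m) :
    ∑ t ∈ Finset.Icc 1 m, (Δ t) ^ 2 * VC ^ 2 +
        ∑ t ∈ Finset.Icc (m + 1) T, (Δ t) ^ 2 * VN ^ 2 ≤
      ∑ t ∈ Finset.Icc 1 T, (Δ t) ^ 2 * (σ t) ^ 2 := by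
  have hclam1 : c * lam < 1 := (lt_div_iff₀ hlam).mp hclam
  have hclamnn : 0 ≤ c * lam := le_of_lt (mul_pos hc hlam)
  have hfac : ∀ s : ℕ, 1 ≤ s → 0 < 1 - c * lam / (s : ℝ) := by
    intro s hs
    have hs' : (1:ℝ) ≤ (s:ℝ) := by exact_mod_cast hs
    have : c * lam / (s:ℝ) ≤ c * lam := div_le_self hclamnn hs'
    linarith
  have hprodpos : ∀ t : ℕ, 0 < ∏ s ∈ Finset.Icc (t + 1) T, (1 - c * lam / (s : ℝ)) := by
    intro t
    apply Finset.prod_pos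
    intro s hs
    exact hfac s (le_trans (Nat.le_add_left 1 t) (Finset.mem_Icc.mp hs).1)
  have hpos : ∀ t : ℕ, 1 ≤ t → 0 < Δ t := by
    intro t ht
    rw [hΔ]
    have ht' : (0:ℝ) < (t:ℝ) := by exact_mod_cast ht
    exact mul_pos (div_pos hc ht') (hprodpos t)
  have hstep : ∀ t : ℕ, 1 ≤ t → t < T → Δ (t + 1) ≤ Δ t := by
    intro t ht htT
    have hsplit : Finset.Icc (t + 1) T = insert (t + 1) (Finset.Icc (t + 2) T) := by
      ext x
      simp only [Finset.mem_Icc, Finset.mem_insert]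
      omega
    have hnm : (t + 1) ∉ Finset.Icc (t + 2) T := by
      simp [Finset.mem_Icc]
    rw [hΔ t, hΔ (t+1), hsplit, Finset.prod_insert hnm]
    have hQ : (0:ℝ) ≤ ∏ s ∈ Finset.Icc (t + 2) T, (1 - c * lam / (s : ℝ)) := by
      apply Finset.prod_nonneg
      intro s hs
      exact le_of_lt (hfac s (le_trans (by omega) (Finset.mem_Icc.mp hs).1))
    have key : c / ((t:ℝ) + 1) ≤ (c / t) * (1 - c * lam / ((t:ℝ) + 1)) := by
      have ht' : (1:ℝ) ≤ (t:ℝ) := by exact_mod_cast ht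
      have h0 : (0:ℝ) < (t:ℝ) := by linarith
      have h1 : (0:ℝ) < (t:ℝ) + 1 := by linarith
      rw [div_mul_eq_mul_div, div_le_div_iff₀ h1 h0]
      have h2 : c * (1 - c * lam / ((t:ℝ) + 1)) * ((t:ℝ) + 1)
          = c * ((t:ℝ) + 1) - c * (c * lam) := by
        field_simp
      rw [h2]
      nlinarith [mul_le_mul_of_nonneg_left hclam1.le hc.le]
    push_cast
    calc c / ((t:ℝ) + 1) * ∏ s ∈ Finset.Icc (t + 2) T, (1 - c * lam / (s : ℝ))
        ≤ (c / t) * (1 - c * lam / ((t:ℝ) + 1)) *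
            ∏ s ∈ Finset.Icc (t + 2) T, (1 - c * lam / (s : ℝ)) := by
          exact mul_le_mul_of_nonneg_right key hQ
      _ = c / ↑t * ((1 - c * lam / ((t:ℝ) + 1)) *
            ∏ s ∈ Finset.Icc (t + 2) T, (1 - c * lam / (s : ℝ))) := by ring
  have hanti : ∀ a b : ℕ, 1 ≤ a → a ≤ b → b ≤ T → Δ b ≤ Δ a := by
    intro a b ha hab hbT
    induction b with
    | zero => omega
    | succ n ih =>
      rcases Nat.eq_or_lt_of_le hab with h | h
      · rw [h]
      · have han : a ≤ n := by omega
        have hnT : n ≤ T := by omega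
        exact le_trans (hstep n (le_trans ha han) (by omega)) (ih han hnT)
  -- weights
  set w : ℕ → ℝ := fun t => Δ t ^ 2 with hw
  have hwnn : ∀ t, 0 ≤ w t := fun t => sq_nonneg _
  set I := Finset.Icc 1 T with hI
  set A := I.filter (fun t => σ t = VC) with hA
  set I1 := Finset.Icc 1 m with hI1
  have hwmono : ∀ a b : ℕ, 1 ≤ a → a ≤ b → b ≤ T → w b ≤ w a := by
    intro a b ha hab hbT
    exact pow_le_pow_left₀ (hpos b (le_trans ha hab)).le (hanti a b ha hab hbT) 2
  -- card facts
  have hcardI1 : I1.card = m := by simp [hI1]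
  have hcardA : A.card = m := hσcard
  have hksdiff : (A \ I1).card = (I1 \ A).card := by
    have h1 := Finset.card_sdiff_add_card_inter A I1
    have h2 := Finset.card_sdiff_add_card_inter I1 A
    rw [Finset.inter_comm] at h2
    omega
  -- key sum inequality
  have hSA : ∑ t ∈ A, w t ≤ ∑ t ∈ I1, w t := by
    have hsplitA : ∑ t ∈ A ∩ I1, w t + ∑ t ∈ A \ I1, w t = ∑ t ∈ A, w t :=
      Finset.sum_inter_add_sum_sdiff A I1 w
    have hsplitI1 : ∑ t ∈ I1 ∩ A, w t + ∑ t ∈ I1 \ A, w t = ∑ t ∈ I1, w t :=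
      Finset.sum_inter_add_sum_sdiff I1 A w
    rw [Finset.inter_comm] at hsplitI1
    rcases Finset.eq_empty_or_nonempty (A \ I1) with he | hne
    · have hsub : A \ I1 = ∅ := he
      have : ∑ t ∈ A \ I1, w t = 0 := by rw [hsub]; simp
      have hnn : 0 ≤ ∑ t ∈ I1 \ A, w t := Finset.sum_nonneg fun t _ => hwnn t
      linarith
    · obtain ⟨t0, ht0⟩ := hne
      have ht0A : t0 ∈ A := (Finset.mem_sdiff.mp ht0).1
      have ht0I : t0 ∈ I := Finset.mem_filter.mp ht0A |>.1
      have ht0T : t0 ≤ T := (Finset.mem_Icc.mp ht0I).2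
      have ht0m : m + 1 ≤ t0 := by
        have := (Finset.mem_sdiff.mp ht0).2
        have h1 := (Finset.mem_Icc.mp ht0I).1
        simp [hI1, Finset.mem_Icc] at this
        omega
      have hmT : m + 1 ≤ T := le_trans ht0m ht0T
      have h1 : ∑ t ∈ A \ I1, w t ≤ (A \ I1).card • w (m + 1) := by
        apply Finset.sum_le_card_nsmul
        intro t ht
        have htA : t ∈ A := (Finset.mem_sdiff.mp ht).1
        have htI : t ∈ I := Finset.mem_filter.mp htA |>.1
        have htT : t ≤ T := (Finset.mem_Icc.mp htI).2
        have htm : m + 1 ≤ t := by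
          have := (Finset.mem_sdiff.mp ht).2
          have h1 := (Finset.mem_Icc.mp htI).1
          simp [hI1, Finset.mem_Icc] at this
          omega
        exact hwmono (m+1) t (by omega) htm htT
      have h2 : (I1 \ A).card • w (m + 1) ≤ ∑ t ∈ I1 \ A, w t := by
        apply Finset.card_nsmul_le_sum
        intro t ht
        have htI1 : t ∈ I1 := (Finset.mem_sdiff.mp ht).1
        have h1 := (Finset.mem_Icc.mp htI1).1
        have h2' := (Finset.mem_Icc.mp htI1).2
        exact hwmono t (m+1) h1 (by omega) hmT
      rw [hksdiff] at h1
      linarith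
  -- rewrite RHS
  have hRHS : ∑ t ∈ I, Δ t ^ 2 * σ t ^ 2 =
      VC ^ 2 * ∑ t ∈ A, w t + VN ^ 2 * ∑ t ∈ I.filter (fun t => ¬ σ t = VC), w t := by
    rw [← Finset.sum_filter_add_sum_filter_not I (fun t => σ t = VC)
      (fun t => Δ t ^ 2 * σ t ^ 2)]
    congr 1
    · rw [Finset.mul_sum]
      apply Finset.sum_congr rfl
      intro t ht
      have := (Finset.mem_filter.mp ht).2
      rw [this]; ring
    · rw [Finset.mul_sum]
      apply Finset.sum_congr rfl
      intro t ht
      have h1 := (Finset.mem_filter.mp ht).1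
      have h2 := (Finset.mem_filter.mp ht).2
      rcases hσval t h1 with h | h
      · exact absurd h h2
      · rw [h]; ring
  -- total sums
  have hStot : ∑ t ∈ I1, w t + ∑ t ∈ Finset.Icc (m+1) T, w t = ∑ t ∈ I, w t := by
    have e1 : Finset.Icc 1 m = Finset.Ioc 0 m := by ext x; simp [Finset.mem_Icc]; omega
    have e2 : Finset.Icc (m+1) T = Finset.Ioc m T := by ext x; simp [Finset.mem_Icc]
    have e3 : Finset.Icc 1 T = Finset.Ioc 0 T := by ext x; simp [Finset.mem_Icc]; omega
    rw [hI1, hI, e1, e2, e3]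
    exact Finset.sum_Ioc_consecutive w (Nat.zero_le m) hm
  have hStotA : ∑ t ∈ A, w t + ∑ t ∈ I.filter (fun t => ¬ σ t = VC), w t = ∑ t ∈ I, w t :=
    Finset.sum_filter_add_sum_filter_not I (fun t => σ t = VC) w
  -- rewrite LHS
  have hLHS1 : ∑ t ∈ Finset.Icc 1 m, Δ t ^ 2 * VC ^ 2 = VC ^ 2 * ∑ t ∈ I1, w t := by
    rw [Finset.mul_sum]; apply Finset.sum_congr rfl; intro t _; ring
  have hLHS2 : ∑ t ∈ Finset.Icc (m+1) T, Δ t ^ 2 * VN ^ 2 =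
      VN ^ 2 * ∑ t ∈ Finset.Icc (m+1) T, w t := by
    rw [Finset.mul_sum]; apply Finset.sum_congr rfl; intro t _; ring
  rw [hLHS1, hLHS2, hRHS]
  have hV2 : VC ^ 2 ≤ VN ^ 2 := pow_le_pow_left₀ hVC hVCN 2
  nlinarith [hSA, hV2, hStot, hStotA]
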